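/- The four scalar moment polynomials of the D2Q13 lattice Boltzmann scheme, namely p₀(x,y) = 1, p₁(x,y) = −28 + 13(x² + y²), p₂(x,y) = 140 + (x² + y²)(−361/2 + (77/2)(x² + y²)), and p₃(x,y) = −12 + (x² + y²)(581/12 + (x² + y²)(−273/8 + (137/24)(x² + y²))), are pairwise orthogonal with respect to summation over the D2Q13 velocity set: for all i ≠ j in {0,1,2,3}, ∑_{v ∈ V} pᵢ(v) pⱼ(v) = 0. -/
import Mathlib

set_option maxHeartbeats 1000000


/-- The D2Q13 velocity set, a subset of `ℤ²` with 13 velocities. -/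
def d2q13 : Finset (ℤ × ℤ) :=
  {(0, 0), (1, 0), (0, 1), (-1, 0), (0, -1), (1, 1), (-1, 1), (-1, -1), (1, -1),
   (2, 0), (0, 2), (-2, 0), (0, -2)}

/-- The four scalar moment polynomials of the D2Q13 lattice Boltzmann scheme,
viewed as real functions of the two variables `x, y`. -/
noncomputable def scalarMoment : Fin 4 → ℝ → ℝ → ℝ :=
  ![fun _ _ => 1,
    fun x y => -28 + 13 * (x ^ 2 + y ^ 2),
    fun x y => 140 + (x ^ 2 + y ^ 2) * (-361 / 2 + (77 / 2) * (x ^ 2 + y ^ 2)),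
    fun x y => -12 + (x ^ 2 + y ^ 2) *
      (581 / 12 + (x ^ 2 + y ^ 2) * (-273 / 8 + (137 / 24) * (x ^ 2 + y ^ 2)))]

lemma d2q13_sum (f : ℤ × ℤ → ℝ) : ∑ v ∈ d2q13, f v =
    f (0,0) + f (1,0) + f (0,1) + f (-1,0) + f (0,-1) + f (1,1) + f (-1,1) + f (-1,-1)
    + f (1,-1) + f (2,0) + f (0,2) + f (-2,0) + f (0,-2) := by
  rw [d2q13]
  rw [Finset.sum_insert (by decide), Finset.sum_insert (by decide),
    Finset.sum_insert (by decide), Finset.sum_insert (by decide),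
    Finset.sum_insert (by decide), Finset.sum_insert (by decide),
    Finset.sum_insert (by decide), Finset.sum_insert (by decide),
    Finset.sum_insert (by decide), Finset.sum_insert (by decide),
    Finset.sum_insert (by decide), Finset.sum_insert (by decide),
    Finset.sum_singleton]
  ring

/-- The four scalar moment polynomials of the D2Q13 scheme are pairwise orthogonal
with respect to summation over the D2Q13 velocity set. -/
theorem d2q13_scalar_moments_orthogonal :
    ∀ i j : Fin 4, i ≠ j →
      ∑ v ∈ d2q13,
        scalarMoment i (v.1 : ℝ) (v.2 : ℝ) * scalarMoment j (v.1 : ℝ) (v.2 : ℝ) = 0 := by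
  intro i j hij
  fin_cases i <;> fin_cases j <;>
    first
    | exact absurd rfl hij
    | (rw [d2q13_sum]; norm_num [scalarMoment])
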